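/- For every n ≥ 2, the sequence (v_n) satisfies the recursion v_{n+1} = v_n² + v_n·v_{n−1} + v_{n−1}² − v_{n−1}³ − v_n − v_{n−1} + 1. -/

import Mathlib

/-- `v` is the sequence defined by `v 1 = 1`, `v 2 = 2`, and for `n ≥ 2`,
`v (n+1) = 1 + (Σ_{1≤i≤n} 1/v_i) / (1 - Σ_{1≤i<j≤n} 1/(v_i v_j))`.
These equations determine `v n` uniquely for all `n ≥ 1`. -/
def vSpec (v : ℕ → ℚ) : Prop :=
  v 1 = 1 ∧ v 2 = 2 ∧ ∀ n, 2 ≤ n →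
    v (n + 1) = 1 + (∑ i ∈ Finset.Icc 1 n, 1 / v i) /
      (1 - ∑ p ∈ (Finset.Icc 1 n ×ˢ Finset.Icc 1 n).filter (fun p => p.1 < p.2),
        1 / (v p.1 * v p.2))

section Aux
open Finset

noncomputable def Sv (v : ℕ → ℚ) (n : ℕ) : ℚ := ∑ i ∈ Finset.Icc 1 n, 1 / v i

noncomputable def Qv (v : ℕ → ℚ) (n : ℕ) : ℚ :=
  1 - ∑ p ∈ (Finset.Icc 1 n ×ˢ Finset.Icc 1 n).filter (fun p => p.1 < p.2),
        1 / (v p.1 * v p.2)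

lemma pair_succ (n : ℕ) (f : ℕ × ℕ → ℚ) :
    ∑ p ∈ ((Icc 1 (n+1)) ×ˢ (Icc 1 (n+1))).filter (fun p => p.1 < p.2), f p
    = ∑ p ∈ ((Icc 1 n) ×ˢ (Icc 1 n)).filter (fun p => p.1 < p.2), f p
      + ∑ i ∈ Icc 1 n, f (i, n+1) := by
  have key : ∀ m : ℕ, ∑ p ∈ ((Icc 1 m) ×ˢ (Icc 1 m)).filter (fun p => p.1 < p.2), f p
      = ∑ i ∈ Icc 1 m, ∑ j ∈ Icc 1 m, if i < j then f (i, j) else 0 := by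
    intro m
    rw [Finset.sum_filter, Finset.sum_product]
  have hins : Icc 1 (n+1) = insert (n+1) (Icc 1 n) := by
    ext x; simp [Finset.mem_Icc]; omega
  have hnot : n+1 ∉ Icc 1 n := by simp
  rw [key, key, hins, Finset.sum_insert hnot]
  have h1 : ∑ j ∈ insert (n+1) (Icc 1 n), (if n+1 < j then f (n+1, j) else 0) = 0 := by
    apply Finset.sum_eq_zero
    intro j hj
    simp only [Finset.mem_insert, Finset.mem_Icc] at hj
    have : ¬ (n+1 < j) := by omega
    simp [this]
  rw [h1]
  rw [Finset.sum_congr rfl (fun i hi => Finset.sum_insert hnot)]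
  rw [Finset.sum_add_distrib]
  have h2 : ∑ i ∈ Icc 1 n, (if i < n+1 then f (i, n+1) else 0) = ∑ i ∈ Icc 1 n, f (i, n+1) := by
    apply Finset.sum_congr rfl
    intro i hi
    simp only [Finset.mem_Icc] at hi
    have : i < n+1 := by omega
    simp [this]
  rw [h2]; ring

lemma Sv_succ (v : ℕ → ℚ) (n : ℕ) (hn : 1 ≤ n) :
    Sv v (n+1) = Sv v n + 1 / v (n+1) := by
  unfold Sv
  rw [Finset.sum_Icc_succ_top (by omega : 1 ≤ n+1)]

lemma Qv_succ (v : ℕ → ℚ) (n : ℕ) :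
    Qv v (n+1) = Qv v n - (Sv v n) * (1 / v (n+1)) := by
  unfold Qv Sv
  rw [pair_succ n (fun p => 1 / (v p.1 * v p.2))]
  rw [Finset.sum_mul]
  have : ∀ i ∈ Icc 1 n, (fun i => 1 / (v i * v (n+1))) i = (fun i => 1 / v i * (1 / v (n+1))) i := by
    intro i _; ring
  rw [Finset.sum_congr rfl this]
  ring

def VInv (v : ℕ → ℚ) (n : ℕ) : Prop :=
  0 < Qv v n ∧ 0 < Sv v n ∧ Sv v n = (v (n+1) - 1) * Qv v n ∧
  Qv v n * (v n * (v (n+1) - 1 - (v n - 1) * v n)) = 1 ∧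
  v (n + 1) = v n ^ 2 + v n * v (n - 1) + v (n - 1) ^ 2 - v (n - 1) ^ 3
      - v n - v (n - 1) + 1

lemma inv_all (v : ℕ → ℚ) (hv : vSpec v) (n : ℕ) (hn : 2 ≤ n) : VInv v n := by
  obtain ⟨h1, h2, hrec⟩ := hv
  have hspec : ∀ m, 2 ≤ m → v (m+1) = 1 + Sv v m / Qv v m := by
    intro m hm; exact hrec m hm
  induction n, hn using Nat.le_induction with
  | base =>
    have hS2 : Sv v 2 = 3/2 := by
      unfold Sv
      have : Icc 1 2 = ({1, 2} : Finset ℕ) := by decide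
      rw [this, Finset.sum_pair (by norm_num)]
      rw [h1, h2]; norm_num
    have hQ2 : Qv v 2 = 1/2 := by
      unfold Qv
      have : ((Icc 1 2 ×ˢ Icc 1 2).filter (fun p : ℕ × ℕ => p.1 < p.2)) = {(1, 2)} := by decide
      rw [this, Finset.sum_singleton, h1, h2]; norm_num
    have hv3 : v 3 = 4 := by
      have := hspec 2 le_rfl
      rw [hS2, hQ2] at this
      norm_num at this
      exact this
    refine ⟨by rw [hQ2]; norm_num, by rw [hS2]; norm_num, ?_, ?_, ?_⟩
    · rw [hS2, hQ2, show (2:ℕ)+1 = 3 from rfl, hv3]; norm_num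
    · rw [hQ2, show (2:ℕ)+1 = 3 from rfl, hv3, h2]; norm_num
    · rw [show (2:ℕ)+1 = 3 from rfl, show (2:ℕ)-1 = 1 from rfl, hv3, h2, h1]; norm_num
  | succ n hn ih =>
    obtain ⟨hQ, hS, hSQ, hR, _⟩ := ih
    have hQne : Qv v n ≠ 0 := ne_of_gt hQ
    have hvn1 : 1 < v (n+1) := by
      rw [hspec n hn]
      have : 0 < Sv v n / Qv v n := div_pos hS hQ
      linarith
    have hvn1pos : (0:ℚ) < v (n+1) := by linarith
    have hvn1ne : v (n+1) ≠ 0 := ne_of_gt hvn1pos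
    have hQsucc : Qv v (n+1) = Qv v n / v (n+1) := by
      rw [Qv_succ, hSQ]
      field_simp
      ring
    have hQ' : 0 < Qv v (n+1) := by rw [hQsucc]; positivity
    have hQ'ne : Qv v (n+1) ≠ 0 := ne_of_gt hQ'
    have hSsucc : Sv v (n+1) = Sv v n + 1 / v (n+1) := Sv_succ v n (by omega)
    have hS' : 0 < Sv v (n+1) := by rw [hSsucc]; positivity
    have hspec' := hspec (n+1) (by omega)
    have hSQ' : Sv v (n+1) = (v (n+1+1) - 1) * Qv v (n+1) := by
      rw [hspec']
      field_simp
      ring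
    -- key identity: v(n+2) = 1 + (v(n+1)-1)*v(n+1) + v n * (v(n+1)-1-(v n -1)*v n)
    have hkey : v (n+1+1) = 1 + (v (n+1) - 1) * v (n+1)
        + v n * (v (n+1) - 1 - (v n - 1) * v n) := by
      rw [hspec', hSsucc, hQsucc, hSQ]
      field_simp
      linear_combination -hR
    refine ⟨hQ', hS', hSQ', ?_, ?_⟩
    · rw [hQsucc, hkey]
      field_simp
      linear_combination hR
    · rw [hkey]
      simp only [Nat.add_sub_cancel]
      ring

end Aux

/-- For `n ≥ 2`, `v_{n+1} = v_n² + v_n v_{n−1} + v_{n−1}² − v_{n−1}³ − v_n − v_{n−1} + 1`. -/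
theorem stmt4 (v : ℕ → ℚ) (hv : vSpec v) (n : ℕ) (hn : 2 ≤ n) :
    v (n + 1) = v n ^ 2 + v n * v (n - 1) + v (n - 1) ^ 2 - v (n - 1) ^ 3
      - v n - v (n - 1) + 1 := by
  exact (inv_all v hv n hn).2.2.2.2
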